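/- For every integer t ≥ 1 and all indices i, j ∈ {1,…,n}, the squared diffusion distance satisfies: Σ_{k=1}^n (A^t(i,k) − A^t(j,k))²/deg(k) = ⟨Φ_t(i), Φ_t(i)⟩ + ⟨Φ_t(j), Φ_t(j)⟩ − 2⟨Φ_t(i), Φ_t(j)⟩ = ‖Φ_t(i) − Φ_t(j)‖². -/

import Mathlib

open Matrix BigOperators

/-- The squared diffusion distance satisfies
`Σ_k (A^t(i,k) − A^t(j,k))²/deg(k)
  = ⟨Φ_t(i), Φ_t(i)⟩ + ⟨Φ_t(j), Φ_t(j)⟩ − 2⟨Φ_t(i), Φ_t(j)⟩ = ‖Φ_t(i) − Φ_t(j)‖²`. -/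
theorem dm_diffusion_distance_identity
    (n : ℕ) (hn : 1 ≤ n)
    (W : Matrix (Fin n) (Fin n) ℝ)
    (hW_symm : Wᵀ = W)
    (hW_nonneg : ∀ i k, 0 ≤ W i k)
    (deg : Fin n → ℝ) (hdeg_def : ∀ i, deg i = ∑ k, W i k)
    (hdeg_pos : ∀ i, 0 < deg i)
    (A : Matrix (Fin n) (Fin n) ℝ)
    (hA : ∀ i k, A i k = W i k / deg i)
    (M : Matrix (Fin n) (Fin n) ℝ)
    (hM : ∀ i k, M i k = W i k / Real.sqrt (deg i * deg k))
    (ψ : Fin n → Fin n → ℝ) (μ : Fin n → ℝ)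
    (h_eig : ∀ l, M.mulVec (ψ l) = μ l • ψ l)
    (h_ortho : ∀ l r, (∑ k, ψ l k * ψ r k) = if l = r then (1 : ℝ) else 0)
    (φ : Fin n → Fin n → ℝ)
    (hφ : ∀ l i, φ l i = ψ l i / Real.sqrt (deg i))
    (Φ : ℕ → Fin n → Fin n → ℝ)
    (hΦ : ∀ t i l, Φ t i l = μ l ^ t * φ l i) :
    ∀ t : ℕ, 1 ≤ t → ∀ i j : Fin n,
      ((∑ k, ((A ^ t) i k - (A ^ t) j k) ^ 2 / deg k) =
        (∑ l, Φ t i l * Φ t i l) + (∑ l, Φ t j l * Φ t j l)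
          - 2 * ∑ l, Φ t i l * Φ t j l) ∧
      ((∑ k, ((A ^ t) i k - (A ^ t) j k) ^ 2 / deg k) =
        ∑ l, (Φ t i l - Φ t j l) ^ 2) := by
  intro t ht i j
  have sqrt_pos : ∀ k, 0 < Real.sqrt (deg k) := fun k => Real.sqrt_pos.mpr (hdeg_pos k)
  have sqrt_ne : ∀ k, Real.sqrt (deg k) ≠ 0 := fun k => (sqrt_pos k).ne'
  set Ψ : Matrix (Fin n) (Fin n) ℝ := Matrix.of ψ with hΨdef
  have hΨΨT : Ψ * Ψᵀ = 1 := by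
    ext l r
    simpa [Matrix.mul_apply, Matrix.one_apply, hΨdef] using h_ortho l r
  have hΨTΨ : Ψᵀ * Ψ = 1 := mul_eq_one_comm.mp hΨΨT
  have hMΨ : M * Ψᵀ = Ψᵀ * Matrix.diagonal μ := by
    ext a l
    have h := congrFun (h_eig l) a
    simp only [Matrix.mulVec, dotProduct, Pi.smul_apply, smul_eq_mul] at h
    rw [Matrix.mul_apply, Matrix.mul_diagonal]
    simp only [Matrix.transpose_apply, hΨdef, Matrix.of_apply]
    rw [h, mul_comm]
  have hMdecomp : M = Ψᵀ * Matrix.diagonal μ * Ψ := by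
    calc M = M * (Ψᵀ * Ψ) := by rw [hΨTΨ, mul_one]
    _ = (M * Ψᵀ) * Ψ := by rw [mul_assoc]
    _ = Ψᵀ * Matrix.diagonal μ * Ψ := by rw [hMΨ]
  have hMpow : ∀ s : ℕ, M ^ s = Ψᵀ * Matrix.diagonal (fun l => μ l ^ s) * Ψ := by
    intro s
    induction s with
    | zero => simp [hΨTΨ]
    | succ s ih =>
      rw [pow_succ, ih, hMdecomp]
      calc Ψᵀ * Matrix.diagonal (fun l => μ l ^ s) * Ψ * (Ψᵀ * Matrix.diagonal μ * Ψ)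
          = Ψᵀ * Matrix.diagonal (fun l => μ l ^ s) * (Ψ * Ψᵀ) * Matrix.diagonal μ * Ψ := by
            simp only [mul_assoc]
        _ = Ψᵀ * (Matrix.diagonal (fun l => μ l ^ s) * Matrix.diagonal μ) * Ψ := by
            rw [hΨΨT]; simp only [mul_one, mul_assoc]
        _ = Ψᵀ * Matrix.diagonal (fun l => μ l ^ (s + 1)) * Ψ := by
            rw [Matrix.diagonal_mul_diagonal]
            have hfun : (fun l => μ l ^ s * μ l) = fun l => μ l ^ (s + 1) := by
              funext l; rw [pow_succ]
            rw [hfun]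
  set E : Matrix (Fin n) (Fin n) ℝ := Matrix.diagonal (fun k => Real.sqrt (deg k)) with hE
  set Einv : Matrix (Fin n) (Fin n) ℝ := Matrix.diagonal (fun k => (Real.sqrt (deg k))⁻¹)
    with hEinv
  have hEinvE : Einv * E = 1 := by
    rw [hEinv, hE, Matrix.diagonal_mul_diagonal]
    rw [show (fun k => (Real.sqrt (deg k))⁻¹ * Real.sqrt (deg k)) = fun _ => (1:ℝ) by
      funext k; exact inv_mul_cancel₀ (sqrt_ne k)]
    exact Matrix.diagonal_one
  have hEEinv : E * Einv = 1 := by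
    rw [hEinv, hE, Matrix.diagonal_mul_diagonal]
    rw [show (fun k => Real.sqrt (deg k) * (Real.sqrt (deg k))⁻¹) = fun _ => (1:ℝ) by
      funext k; exact mul_inv_cancel₀ (sqrt_ne k)]
    exact Matrix.diagonal_one
  have hAeq : A = Einv * M * E := by
    ext a b
    rw [hEinv, hE]
    rw [Matrix.mul_diagonal, Matrix.diagonal_mul, hA, hM,
      Real.sqrt_mul (hdeg_pos a).le]
    have hsq : Real.sqrt (deg a) * Real.sqrt (deg a) = deg a :=
      Real.mul_self_sqrt (hdeg_pos a).le
    field_simp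
    have h2 : Real.sqrt (deg a) * (Real.sqrt (deg a) * Real.sqrt (deg b))
        = deg a * Real.sqrt (deg b) := by rw [← mul_assoc, hsq]
    rw [Real.sq_sqrt (hdeg_pos a).le, mul_div_mul_right _ _ (sqrt_ne b)]
  have hApow : ∀ s : ℕ, A ^ s = Einv * M ^ s * E := by
    intro s
    induction s with
    | zero => simp [hEinvE]
    | succ s ih =>
      rw [pow_succ, ih, hAeq, pow_succ]
      calc Einv * M ^ s * E * (Einv * M * E)
          = Einv * M ^ s * (E * Einv) * M * E := by simp only [mul_assoc]
        _ = Einv * (M ^ s * M) * E := by rw [hEEinv]; simp only [mul_one, mul_assoc]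
  -- entrywise formula for A^t
  have hAt : ∀ a k, (A ^ t) a k = (∑ l, Φ t a l * ψ l k) * Real.sqrt (deg k) := by
    intro a k
    rw [hApow t, hMpow t]
    rw [hEinv, hE]
    rw [Matrix.mul_diagonal, Matrix.diagonal_mul]
    have : (Ψᵀ * Matrix.diagonal (fun l => μ l ^ t) * Ψ) a k
        = ∑ l, ψ l a * μ l ^ t * ψ l k := by
      rw [Matrix.mul_apply]
      refine Finset.sum_congr rfl fun l _ => ?_
      rw [Matrix.mul_diagonal, Matrix.transpose_apply]
      simp [hΨdef]
    rw [this, Finset.mul_sum, Finset.sum_mul, Finset.sum_mul]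
    refine Finset.sum_congr rfl fun l _ => ?_
    rw [hΦ, hφ]
    field_simp
  -- difference formula
  set c : Fin n → ℝ := fun l => Φ t i l - Φ t j l with hc
  have hdiff : ∀ k, (A ^ t) i k - (A ^ t) j k = (∑ l, c l * ψ l k) * Real.sqrt (deg k) := by
    intro k
    rw [hAt i k, hAt j k, ← sub_mul, ← Finset.sum_sub_distrib]
    refine congrArg (· * Real.sqrt (deg k)) ?_
    refine Finset.sum_congr rfl fun l _ => ?_
    rw [hc]
    ring
  -- main sum reduces to ∑_k (∑_l c l ψ l k)^2
  have hsum1 : (∑ k, ((A ^ t) i k - (A ^ t) j k) ^ 2 / deg k)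
      = ∑ k, (∑ l, c l * ψ l k) ^ 2 := by
    refine Finset.sum_congr rfl fun k _ => ?_
    rw [hdiff k, mul_pow, Real.sq_sqrt (hdeg_pos k).le,
      mul_div_assoc, div_self (hdeg_pos k).ne']
    rw [mul_one]
  -- orthonormality collapse
  have hsum2 : (∑ k, (∑ l, c l * ψ l k) ^ 2) = ∑ l, (c l) ^ 2 := by
    have : ∀ k, (∑ l, c l * ψ l k) ^ 2
        = ∑ l, ∑ r, (c l * c r) * (ψ l k * ψ r k) := by
      intro k
      rw [sq, Finset.sum_mul_sum]
      refine Finset.sum_congr rfl fun l _ => Finset.sum_congr rfl fun r _ => by ring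
    simp_rw [this]
    rw [Finset.sum_comm]
    refine Finset.sum_congr rfl fun l _ => ?_
    rw [Finset.sum_comm]
    have : ∀ r, (∑ k, (c l * c r) * (ψ l k * ψ r k))
        = (c l * c r) * (if l = r then (1:ℝ) else 0) := by
      intro r
      rw [← Finset.mul_sum, h_ortho l r]
    simp_rw [this]
    simp [mul_ite, mul_one, mul_zero, Finset.sum_ite_eq, sq]
  have hmain : (∑ k, ((A ^ t) i k - (A ^ t) j k) ^ 2 / deg k) = ∑ l, (c l) ^ 2 :=
    hsum1.trans hsum2
  constructor
  · rw [hmain]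
    have : ∀ l, (c l) ^ 2 = Φ t i l * Φ t i l + Φ t j l * Φ t j l
        - 2 * (Φ t i l * Φ t j l) := by
      intro l; rw [hc]; ring
    simp_rw [this]
    rw [Finset.sum_sub_distrib, Finset.sum_add_distrib, ← Finset.mul_sum]
  · exact hmain
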